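/- Under the same assumptions (P row-stochastic nonnegative, λ_v ∈ [0,1], every node has a path to a node s with λ_s < 1), the matrix I - ΛP is invertible. -/
import Mathlib

theorem stmt_4 {n : ℕ} (P : Matrix (Fin n) (Fin n) ℝ)
    (hPnn : ∀ v w, 0 ≤ P v w)
    (hrow : ∀ v, ∑ w, P v w = 1)
    (lam : Fin n → ℝ) (hlam : ∀ v, lam v ∈ Set.Icc (0:ℝ) 1)
    (hpath : ∀ v, ∃ s, lam s < 1 ∧ Relation.ReflTransGen (fun a b => 0 < P a b) v s) :
    IsUnit (1 - Matrix.diagonal lam * P) := by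
  rw [Matrix.isUnit_iff_isUnit_det, isUnit_iff_ne_zero]
  intro hdet
  obtain ⟨x, hx0, hxe⟩ := Matrix.exists_mulVec_eq_zero_iff.mpr hdet
  have key : ∀ v, x v = lam v * ∑ w, P v w * x w := by
    intro v
    have h := congrFun hxe v
    rw [Matrix.sub_mulVec, Pi.sub_apply, Matrix.one_mulVec, Pi.zero_apply, sub_eq_zero,
      ← Matrix.mulVec_mulVec, Matrix.mulVec_diagonal] at h
    rw [h, Matrix.mulVec, dotProduct]
  obtain ⟨v0, hv0⟩ := Function.ne_iff.mp hx0
  obtain ⟨v1, -, hv1⟩ := Finset.exists_max_image Finset.univ (fun v => |x v|)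
    ⟨v0, Finset.mem_univ v0⟩
  set M : ℝ := |x v1| with hM
  have hbound : ∀ v, |x v| ≤ M := fun v => hv1 v (Finset.mem_univ v)
  have hMpos : 0 < M := lt_of_lt_of_le (abs_pos.mpr hv0) (hbound v0)
  have hSbound : ∀ a, |∑ w, P a w * x w| ≤ M := by
    intro a
    calc |∑ w, P a w * x w| ≤ ∑ w, |P a w * x w| := Finset.abs_sum_le_sum_abs _ _
      _ ≤ ∑ w, P a w * M := by
          refine Finset.sum_le_sum fun w _ => ?_
          rw [abs_mul, abs_of_nonneg (hPnn a w)]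
          exact mul_le_mul_of_nonneg_left (hbound w) (hPnn a w)
      _ = M := by rw [← Finset.sum_mul, hrow, one_mul]
  have edge : ∀ a b, |x a| = M → 0 < P a b → |x b| = M := by
    intro a b ha hab
    have h1 : M ≤ |∑ w, P a w * x w| := by
      have := key a
      rw [← ha, this, abs_mul, abs_of_nonneg (hlam a).1]
      calc lam a * |∑ w, P a w * x w| ≤ 1 * |∑ w, P a w * x w| :=
            mul_le_mul_of_nonneg_right (hlam a).2 (abs_nonneg _)
        _ = |∑ w, P a w * x w| := one_mul _
    have h2 : ∑ w, P a w * |x w| = M := by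
      have hle : ∑ w, P a w * |x w| ≤ M := by
        calc ∑ w, P a w * |x w| ≤ ∑ w, P a w * M :=
              Finset.sum_le_sum fun w _ => mul_le_mul_of_nonneg_left (hbound w) (hPnn a w)
          _ = M := by rw [← Finset.sum_mul, hrow, one_mul]
      have hge : M ≤ ∑ w, P a w * |x w| := by
        refine le_trans h1 ?_
        calc |∑ w, P a w * x w| ≤ ∑ w, |P a w * x w| := Finset.abs_sum_le_sum_abs _ _
          _ = ∑ w, P a w * |x w| := by
              refine Finset.sum_congr rfl fun w _ => ?_
              rw [abs_mul, abs_of_nonneg (hPnn a w)]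
      linarith
    have h3 : ∑ w, P a w * (M - |x w|) = 0 := by
      have : ∑ w, P a w * (M - |x w|) = (∑ w, P a w * M) - ∑ w, P a w * |x w| := by
        rw [← Finset.sum_sub_distrib]
        exact Finset.sum_congr rfl fun w _ => by ring
      rw [this, h2, ← Finset.sum_mul, hrow, one_mul, sub_self]
    have h4 := (Finset.sum_eq_zero_iff_of_nonneg fun w _ =>
      mul_nonneg (hPnn a w) (sub_nonneg.mpr (hbound w))).mp h3 b (Finset.mem_univ b)
    have : M - |x b| = 0 := by
      rcases mul_eq_zero.mp h4 with h | h
      · exact absurd h (ne_of_gt hab)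
      · exact h
    linarith
  have pathlem : ∀ v s, Relation.ReflTransGen (fun a b => 0 < P a b) v s →
      |x v| = M → |x s| = M := by
    intro v s h
    induction h with
    | refl => exact id
    | tail _ hbc ih => exact fun hv => edge _ _ (ih hv) hbc
  obtain ⟨s, hs1, hs2⟩ := hpath v1
  have hxs : |x s| = M := pathlem v1 s hs2 rfl
  have : |x s| < M := by
    rw [key s, abs_mul, abs_of_nonneg (hlam s).1]
    calc lam s * |∑ w, P s w * x w| ≤ lam s * M :=
          mul_le_mul_of_nonneg_left (hSbound s) (hlam s).1
      _ < 1 * M := by exact mul_lt_mul_of_pos_right hs1 hMpos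
      _ = M := one_mul M
  linarith
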